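/- Let D, G > 0, let 0 < η ≤ 1/(5DG), let v ≥ 0, and let r ∈ ℝ with |r| ≤ D·G. Then (1 − 2ηr)²·η²·v ≤ (1 + 2η²v)·ln(1 + 2η²v). -/

import Mathlib

lemma aux_log (x : ℝ) (hx : 0 ≤ x) : x ≤ (1 + x) * Real.log (1 + x) := by
  have h1 : (0:ℝ) < 1 + x := by linarith
  have h2 : Real.log (1/(1+x)) ≤ 1/(1+x) - 1 :=
    Real.log_le_sub_one_of_pos (by positivity)
  rw [Real.log_div one_ne_zero (ne_of_gt h1), Real.log_one] at h2
  have : x/(1+x) ≤ Real.log (1+x) := by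
    have : 1 - 1/(1+x) = x/(1+x) := by field_simp; ring
    linarith
  calc x = (1+x) * (x/(1+x)) := by field_simp
    _ ≤ (1+x) * Real.log (1+x) := by nlinarith [Real.log_nonneg (by linarith : (1:ℝ) ≤ 1+x)]

/-- Key scalar inequality in the proof of Gaussian exp-concavity (Lemma 9):
for `0 < η ≤ 1/(5DG)`, `v ≥ 0` and `|r| ≤ D·G`,
`(1 - 2ηr)²·η²·v ≤ (1 + 2η²v)·ln(1 + 2η²v)`. -/
theorem stmt_14 (D G η v r : ℝ) (hD : 0 < D) (hG : 0 < G)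
    (hη : 0 < η) (hη' : η ≤ 1 / (5 * D * G)) (hv : 0 ≤ v) (hr : |r| ≤ D * G) :
    (1 - 2 * η * r) ^ 2 * η ^ 2 * v ≤ (1 + 2 * η ^ 2 * v) * Real.log (1 + 2 * η ^ 2 * v) := by
  have hDG : 0 < D * G := by positivity
  have hηDG : η * (D * G) ≤ 1/5 := by
    rw [le_div_iff₀ (by positivity)] at hη'
    nlinarith
  have habs : -(D*G) ≤ r ∧ r ≤ D*G := abs_le.mp hr
  have h1 : η * r ≤ 1/5 := by nlinarith [mul_le_mul_of_nonneg_left habs.2 hη.le]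
  have h2 : -(1/5) ≤ η * r := by nlinarith [mul_le_mul_of_nonneg_left habs.1 hη.le]
  have hsq : (1 - 2 * η * r) ^ 2 ≤ 2 := by nlinarith
  have hlhs : (1 - 2 * η * r) ^ 2 * η ^ 2 * v ≤ 2 * η ^ 2 * v := by
    have := mul_le_mul_of_nonneg_right hsq (by positivity : (0:ℝ) ≤ η ^ 2 * v)
    nlinarith
  exact hlhs.trans (aux_log (2 * η ^ 2 * v) (by positivity))
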